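/- Let (a,b) be a feasible bipartite degree-sequence pair with b non-increasing, and fix any feasible partial allocation F(1),…,F(k−1) of b_1 to the first k−1 degree groups of a. Suppose from group k onward the remaining degree of b_1 is allocated greedily backward (highest groups first). Then the updated degree sequences after processing b_1 admit a bipartite graph. -/

import Mathlib

/-- There is a bipartite graph with degree sequences `a` and `b`. -/
def hasBG (m n : ℕ) (a : Fin m → ℕ) (b : Fin n → ℕ) : Prop :=
  ∃ M : Fin m → Fin n → Bool,
    (∀ i, (Finset.univ.filter (fun j => M i j = true)).card = a i) ∧
    (∀ j, (Finset.univ.filter (fun i => M i j = true)).card = b j)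

lemma exchange {m n : ℕ} {A A' : Fin m → ℕ} {b' : Fin n → ℕ} {i i' : Fin m}
    (hlt : A i < A i') (hBG : hasBG m n A b')
    (h1 : A' i = A i + 1) (h2 : A' i' = A i' - 1)
    (h3 : ∀ x, x ≠ i → x ≠ i' → A' x = A x) : hasBG m n A' b' := by
  classical
  obtain ⟨M, hrow, hcol⟩ := hBG
  have hii' : i ≠ i' := by rintro rfl; exact lt_irrefl _ hlt
  -- find column j with M i' j = true, M i j = false
  have hcard : (Finset.univ.filter (fun j => M i j = true)).card
      < (Finset.univ.filter (fun j => M i' j = true)).card := by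
    rw [hrow, hrow]; exact hlt
  have hnss : ¬ (Finset.univ.filter (fun j => M i' j = true))
      ⊆ (Finset.univ.filter (fun j => M i j = true)) := by
    intro hss
    exact absurd (Finset.card_le_card hss) (by omega)
  obtain ⟨j, hj1, hj2⟩ := Finset.not_subset.mp hnss
  have hji' : M i' j = true := (Finset.mem_filter.mp hj1).2
  have hji : M i j = false := by
    have := fun h => hj2 (Finset.mem_filter.mpr ⟨Finset.mem_univ _, h⟩)
    cases h : M i j with
    | false => rfl
    | true => exact absurd h this
  set M' : Fin m → Fin n → Bool := fun x y =>
    if x = i ∧ y = j then true else if x = i' ∧ y = j then false else M x y with hM'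
  refine ⟨M', ?_, ?_⟩
  · intro x
    by_cases hx : x = i
    · subst hx
      have : (Finset.univ.filter (fun y => M' x y = true))
          = insert j (Finset.univ.filter (fun y => M x y = true)) := by
        ext y
        simp only [Finset.mem_filter, Finset.mem_univ, true_and, Finset.mem_insert, hM']
        by_cases hy : y = j <;> simp [hy, hii']
      rw [this, Finset.card_insert_of_notMem (by simp [hji]), hrow, h1]
    · by_cases hx' : x = i'
      · subst hx'
        have : (Finset.univ.filter (fun y => M' x y = true))
            = (Finset.univ.filter (fun y => M x y = true)).erase j := by
          ext y
          simp only [Finset.mem_filter, Finset.mem_univ, true_and, Finset.mem_erase, hM']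
          by_cases hy : y = j <;> simp [hy, hx, Ne.symm hii']
        rw [this, Finset.card_erase_of_mem (by simp [hji']), hrow, h2]
      · have : (Finset.univ.filter (fun y => M' x y = true))
            = Finset.univ.filter (fun y => M x y = true) := by
          ext y; simp [hM', hx, hx']
        rw [this, hrow, h3 x hx hx']
  · intro y
    by_cases hy : y = j
    · subst hy
      have : (Finset.univ.filter (fun x => M' x y = true))
          = insert i ((Finset.univ.filter (fun x => M x y = true)).erase i') := by
        ext x
        simp only [Finset.mem_filter, Finset.mem_univ, true_and, Finset.mem_insert,
          Finset.mem_erase, hM']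
        by_cases hx : x = i
        · simp [hx]
        · by_cases hx' : x = i' <;> simp [hx, hx']
      rw [this, Finset.card_insert_of_notMem (by simp [hji]),
        Finset.card_erase_of_mem (by simp [hji']), hcol]
      have : 1 ≤ b' y := by
        rw [← hcol y]
        exact Finset.card_pos.mpr ⟨i', by simp [hji']⟩
      omega
    · have : (Finset.univ.filter (fun x => M' x y = true))
          = Finset.univ.filter (fun x => M x y = true) := by
        ext x; simp [hM', hy]
      rw [this, hcol]

lemma swap_feasible {m n : ℕ} {a : Fin m → ℕ} {b' : Fin n → ℕ} {S : Finset (Fin m)}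
    {i i' : Fin m} (hi : i ∈ S) (hi' : i' ∉ S) (h1 : 1 ≤ a i) (hle : a i ≤ a i')
    (hBG : hasBG m n (fun x => a x - (if x ∈ S then 1 else 0)) b') :
    hasBG m n (fun x => a x - (if x ∈ insert i' (S.erase i) then 1 else 0)) b' := by
  classical
  have hii' : i ≠ i' := fun h => hi' (h ▸ hi)
  have hiN : i ∉ insert i' (S.erase i) := by
    simp [hii', Finset.mem_erase]
  have hi'N : i' ∈ insert i' (S.erase i) := Finset.mem_insert_self _ _
  apply exchange (A := fun x => a x - (if x ∈ S then 1 else 0)) (i := i) (i' := i')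
  · simp only [hi, hi', if_pos, if_neg, if_true, if_false]
    omega
  · exact hBG
  · simp only [hiN, hi, if_pos, if_neg, if_true, if_false]
    omega
  · simp only [hi'N, hi', if_pos, if_neg, if_true, if_false]
    omega
  · intro x hx hx'
    have : (x ∈ insert i' (S.erase i)) ↔ (x ∈ S) := by
      simp [Finset.mem_insert, Finset.mem_erase, hx, hx']
    simp only [this]


/-- `k`-step greedy lemma: let `(a, b)` be feasible with `b` non-increasing, and let
`F : ℕ → ℕ` give the number of neighbours of node `b 0` chosen in each degree group of `a`
(indexed by the degree value `d`).  Suppose the allocation to degrees `< c` extends to some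
complete feasible allocation, and that from degree `c` upward `F` allocates greedily
backward (highest degrees first, `F d = min(group size, remaining)`).  Then the updated
degree sequences after processing node `b 0` with allocation `F` admit a bipartite graph. -/
theorem stmt7 (m n : ℕ) (a : Fin m → ℕ) (b : Fin (n + 1) → ℕ)
    (hb : Antitone b) (hfeas : hasBG m (n + 1) a b)
    (c : ℕ) (hc : 1 ≤ c) (F : ℕ → ℕ)
    (hgreedy : ∀ d, c ≤ d →
      F d = min ((Finset.univ.filter (fun i : Fin m => a i = d)).card)
        (b 0 - ∑ d' ∈ Finset.Ico 1 c, F d'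
             - ∑ d' ∈ Finset.Ioc d (Finset.univ.sup a), F d'))
    (hpart : ∃ Fc : ℕ → ℕ, (∀ d < c, Fc d = F d) ∧
      ∃ S : Finset (Fin m),
        (∀ d, (S.filter (fun i => a i = d)).card = Fc d) ∧
        S.card = b 0 ∧ (∀ i ∈ S, 1 ≤ a i) ∧
        hasBG m n (fun i => a i - (if i ∈ S then 1 else 0)) (fun j => b j.succ)) :
    ∃ S : Finset (Fin m),
      (∀ d, (S.filter (fun i => a i = d)).card = F d) ∧
      S.card = b 0 ∧ (∀ i ∈ S, 1 ≤ a i) ∧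
      hasBG m n (fun i => a i - (if i ∈ S then 1 else 0)) (fun j => b j.succ) := by
    classical
  obtain ⟨Fc, hFc, S0, hS0counts, hS0card, hS0pos, hS0bg⟩ := hpart
  set sup := Finset.univ.sup a with hsup
  set P : Finset (Fin m) → Prop := fun S =>
    (∀ d < c, (S.filter (fun i => a i = d)).card = F d) ∧
    S.card = b 0 ∧ (∀ i ∈ S, 1 ≤ a i) ∧
    hasBG m n (fun i => a i - (if i ∈ S then 1 else 0)) (fun j => b j.succ) with hP
  have hPS0 : P S0 := by
    refine ⟨fun d hd => by rw [hS0counts d, hFc d hd], hS0card, hS0pos, hS0bg⟩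
  -- choose maximizer of ∑ a over feasible sets
  obtain ⟨S, hSmem, hSmax⟩ := Finset.exists_max_image
    (Finset.univ.filter P) (fun S => ∑ i ∈ S, a i)
    ⟨S0, Finset.mem_filter.mpr ⟨Finset.mem_univ _, hPS0⟩⟩
  have hPS : P S := (Finset.mem_filter.mp hSmem).2
  obtain ⟨hSc, hScard, hSpos, hSbg⟩ := hPS
  have hmax : ∀ T, P T → ∑ i ∈ T, a i ≤ ∑ i ∈ S, a i := fun T hT =>
    hSmax T (Finset.mem_filter.mpr ⟨Finset.mem_univ _, hT⟩)
  set f : ℕ → ℕ := fun d => (S.filter (fun i => a i = d)).card with hf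
  -- total sum of fibers
  have hsum_all : ∑ d ∈ Finset.Ico 1 (sup + 1), f d = b 0 := by
    rw [← hScard]
    exact (Finset.card_eq_sum_card_fiberwise (fun i hi =>
      Finset.mem_Ico.mpr ⟨hSpos i hi, Nat.lt_succ_of_le (Finset.le_sup (Finset.mem_univ i))⟩)).symm
  have hlow : ∑ d ∈ Finset.Ico 1 c, f d = ∑ d ∈ Finset.Ico 1 c, F d :=
    Finset.sum_congr rfl (fun d hd => hSc d (Finset.mem_Ico.mp hd).2)
  -- key downward induction
  have key : ∀ t d, c ≤ d → sup + 1 - d = t → f d = F d := by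
    intro t
    induction t using Nat.strong_induction_on with
    | _ t IHt =>
      intro d hcd ht
      by_cases hdsup : sup < d
      · have hempty : Finset.univ.filter (fun i : Fin m => a i = d) = ∅ := by
          apply Finset.filter_eq_empty_iff.mpr
          intro i _
          have := Finset.le_sup (f := a) (Finset.mem_univ i)
          omega
        have hf0 : f d = 0 := by
          rw [hf]
          simp only
          rw [Finset.card_eq_zero, Finset.filter_eq_empty_iff]
          intro i hi
          have := Finset.le_sup (f := a) (Finset.mem_univ i)
          omega
        rw [hf0, hgreedy d hcd, hempty]
        simp
      · push_neg at hdsup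
        have IH : ∀ d', d < d' → f d' = F d' := by
          intro d' hdd'
          exact IHt (sup + 1 - d') (by omega) d' (by omega) rfl
        have htail : ∑ d' ∈ Finset.Ioc d sup, F d' = ∑ d' ∈ Finset.Ico (d+1) (sup+1), f d' := by
          rw [← Finset.Ico_add_one_add_one_eq_Ioc]
          exact Finset.sum_congr rfl (fun d' hd' =>
            (IH d' (by have := Finset.mem_Ico.mp hd'; omega)).symm)
        set g := (Finset.univ.filter (fun i : Fin m => a i = d)).card with hg
        have hFd : F d = min g ((b 0 - ∑ d' ∈ Finset.Ico 1 c, F d')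
            - ∑ d' ∈ Finset.Ioc d sup, F d') := by
          rw [hgreedy d hcd]
        -- sum splits
        have hsplit1 : ∑ d' ∈ Finset.Ico 1 c, f d' + ∑ d' ∈ Finset.Ico c (sup+1), f d' = b 0 := by
          rw [Finset.sum_Ico_consecutive _ hc (by omega), hsum_all]
        have hsplit2 : ∑ d' ∈ Finset.Ico c (d+1), f d' + ∑ d' ∈ Finset.Ico (d+1) (sup+1), f d'
            = ∑ d' ∈ Finset.Ico c (sup+1), f d' :=
          Finset.sum_Ico_consecutive _ (by omega) (by omega)
        have hsplit3 : ∑ d' ∈ Finset.Ico c (d+1), f d' = ∑ d' ∈ Finset.Ico c d, f d' + f d :=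
          Finset.sum_Ico_succ_top hcd _
        have hfd_le_g : f d ≤ g := Finset.card_le_card
          (Finset.filter_subset_filter _ (Finset.subset_univ S))
        -- abbreviations
        set s := ∑ d' ∈ Finset.Ico c (d+1), f d' with hs
        have hFd' : F d = min g s := by
          rw [hFd, htail, ← hlow]
          congr 1
          omega
        have hfd_le_s : f d ≤ s := by omega
        by_cases heq : f d = min g s
        · rw [heq, hFd']
        · exfalso
          have hlt : f d < min g s := lt_of_le_of_ne (le_min hfd_le_g hfd_le_s) heq
          -- f d < g : get i' with a i' = d, i' ∉ S
          have hnss : ¬ (Finset.univ.filter (fun i : Fin m => a i = d))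
              ⊆ (S.filter (fun i => a i = d)) := by
            intro hss
            have h2 : g ≤ f d := Finset.card_le_card hss
            omega
          obtain ⟨i', hi'1, hi'2⟩ := Finset.not_subset.mp hnss
          have hai' : a i' = d := (Finset.mem_filter.mp hi'1).2
          have hi'S : i' ∉ S := fun h => hi'2 (Finset.mem_filter.mpr ⟨h, hai'⟩)
          -- f d < s : get i ∈ S with c ≤ a i < d
          have hpos : ∑ d' ∈ Finset.Ico c d, f d' ≠ 0 := by omega
          obtain ⟨d₀, hd₀mem, hd₀⟩ := Finset.exists_ne_zero_of_sum_ne_zero hpos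
          obtain ⟨hcd₀, hd₀d⟩ := Finset.mem_Ico.mp hd₀mem
          obtain ⟨i, hifil⟩ := Finset.card_pos.mp (Nat.pos_of_ne_zero hd₀)
          obtain ⟨hiS, hai⟩ := Finset.mem_filter.mp hifil
          -- build swapped set
          set S₂ := insert i' (S.erase i) with hS₂
          have hi'e : i' ∉ S.erase i := fun h => hi'S (Finset.mem_of_mem_erase h)
          have hPS₂ : P S₂ := by
            refine ⟨?_, ?_, ?_, ?_⟩
            · intro d'' hd''
              rw [← hSc d'' hd'']
              congr 1
              ext x
              simp only [Finset.mem_filter, hS₂, Finset.mem_insert, Finset.mem_erase]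
              constructor
              · rintro ⟨hx, hax⟩
                rcases hx with rfl | ⟨_, hx⟩
                · omega
                · exact ⟨hx, hax⟩
              · rintro ⟨hx, hax⟩
                have hxi : x ≠ i := by rintro rfl; omega
                exact ⟨Or.inr ⟨hxi, hx⟩, hax⟩
            · rw [hS₂, Finset.card_insert_of_notMem hi'e, Finset.card_erase_of_mem hiS, hScard]
              have : 1 ≤ b 0 := hScard ▸ Finset.card_pos.mpr ⟨i, hiS⟩
              omega
            · intro x hx
              rcases Finset.mem_insert.mp hx with rfl | hx
              · omega
              · exact hSpos x (Finset.mem_of_mem_erase hx)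
            · exact swap_feasible hiS hi'S (hSpos i hiS) (by omega) hSbg
          have hsum2 : ∑ x ∈ S₂, a x = a i' + ∑ x ∈ S.erase i, a x := by
            rw [hS₂, Finset.sum_insert hi'e]
          have hsum1 : ∑ x ∈ S, a x = a i + ∑ x ∈ S.erase i, a x :=
            (Finset.add_sum_erase _ _ hiS).symm
          have := hmax S₂ hPS₂
          omega
  -- assemble
  refine ⟨S, ?_, hScard, hSpos, hSbg⟩
  intro d
  by_cases hd : d < c
  · exact hSc d hd
  · exact key (sup + 1 - d) d (by omega) rfl
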